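/- PU-Prune soundness (probability part): for an itemset Y and item z with z ≻ y for all y ∈ Y, if SUM(Y.pro) − Σ_{T∈D, Y⊆T, z∉T} p(Y,T) < minPro·|D|, then Pro(W) < minPro·|D| for every superset W of Y∪{z}. -/
import Mathlib


open Finset

def probT {α ι : Type} (p : α → ι → ℝ) (X : Finset α) (t : ι) : ℝ :=
  ∏ i ∈ X, p i t

def Pro {α ι : Type} [DecidableEq α] (D : Finset ι) (Trans : ι → Finset α)
    (p : α → ι → ℝ) (X : Finset α) : ℝ :=
  ∑ t ∈ D.filter (fun t => X ⊆ Trans t), probT p X t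

/-- PU-Prune soundness, probability part. -/
theorem stmt13 {α ι : Type} [DecidableEq α] [LinearOrder α] (D : Finset ι)
    (Trans : ι → Finset α) (p : α → ι → ℝ)
    (hp : ∀ i t, 0 ≤ p i t ∧ p i t ≤ 1)
    (minPro : ℝ) (Y : Finset α) (z : α) (hz : ∀ y ∈ Y, y < z)
    (h : Pro D Trans p Y -
        (∑ t ∈ D.filter (fun t => Y ⊆ Trans t ∧ z ∉ Trans t), probT p Y t) <
          minPro * D.card) :
    ∀ W : Finset α, insert z Y ⊆ W → Pro D Trans p W < minPro * D.card := by
  intro W hW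
  have hprob_nonneg : ∀ (X : Finset α) (t : ι), 0 ≤ probT p X t := fun X t =>
    Finset.prod_nonneg fun i _ => (hp i t).1
  have key : Pro D Trans p Y -
      (∑ t ∈ D.filter (fun t => Y ⊆ Trans t ∧ z ∉ Trans t), probT p Y t)
      = ∑ t ∈ D.filter (fun t => Y ⊆ Trans t ∧ z ∈ Trans t), probT p Y t := by
    unfold Pro
    have hsplit := Finset.sum_filter_add_sum_filter_not
      (D.filter (fun t => Y ⊆ Trans t)) (fun t => z ∈ Trans t) (probT p Y)
    rw [Finset.filter_filter, Finset.filter_filter] at hsplit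
    linarith
  have hle : Pro D Trans p W ≤
      ∑ t ∈ D.filter (fun t => Y ⊆ Trans t ∧ z ∈ Trans t), probT p Y t := by
    unfold Pro
    have hsub : D.filter (fun t => W ⊆ Trans t) ⊆
        D.filter (fun t => Y ⊆ Trans t ∧ z ∈ Trans t) := by
      intro t ht
      simp only [Finset.mem_filter] at ht ⊢
      have hins : insert z Y ⊆ Trans t := hW.trans ht.2
      exact ⟨ht.1, (Finset.subset_insert z Y).trans hins,
        hins (Finset.mem_insert_self z Y)⟩
    calc ∑ t ∈ D.filter (fun t => W ⊆ Trans t), probT p W t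
        ≤ ∑ t ∈ D.filter (fun t => W ⊆ Trans t), probT p Y t := by
          apply Finset.sum_le_sum
          intro t ht
          simp only [Finset.mem_filter] at ht
          have hYW : Y ⊆ W := (Finset.subset_insert z Y).trans hW
          unfold probT
          rw [← Finset.prod_sdiff hYW]
          have h1 : ∏ i ∈ W \ Y, p i t ≤ 1 :=
            Finset.prod_le_one (fun i _ => (hp i t).1) (fun i _ => (hp i t).2)
          calc (∏ i ∈ W \ Y, p i t) * ∏ i ∈ Y, p i t
              ≤ 1 * ∏ i ∈ Y, p i t := by
                apply mul_le_mul_of_nonneg_right h1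
                exact Finset.prod_nonneg fun i _ => (hp i t).1
            _ = ∏ i ∈ Y, p i t := one_mul _
      _ ≤ ∑ t ∈ D.filter (fun t => Y ⊆ Trans t ∧ z ∈ Trans t), probT p Y t :=
          Finset.sum_le_sum_of_subset_of_nonneg hsub fun t _ _ => hprob_nonneg Y t
  linarith [key ▸ h]
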